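/- Let M ∈ ℝ^{N×n} have rank n with thin SVD M = U₁ Σ Vᵀ, H ∈ ℝ^{N×m}, λ > 0. Suppose x* = (θ*, φ*) satisfies U₁ᵀHφ* = 0, and let v₁ = (0, v_φ¹), v₂ = (v_θ², v_φ²) be kernel vectors of [M H] with v_θ² ≠ 0. Then the regularized cost J_P(θ,φ) = ‖f − Mθ − Hφ‖² + λ‖(ΣVᵀ)⁻¹U₁ᵀHφ‖² satisfies J_P(x* + v₁) < J_P(x* + v₂). -/

import Mathlib

open Matrix

/-- Strict decrease: with `U₁ᵀHφ* = 0`, along kernel directions `v₁ = (0, vφ¹)`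
and `v₂ = (vθ², vφ²)` of `[M H]` with `vθ² ≠ 0`, the regularized cost satisfies
`J_P(x* + v₁) < J_P(x* + v₂)`. -/
theorem regularized_cost_strict (N n m : ℕ)
    (M U₁ : Matrix (Fin N) (Fin n) ℝ) (U₂ : Matrix (Fin N) (Fin (N - n)) ℝ)
    (H : Matrix (Fin N) (Fin m) ℝ)
    (S V : Matrix (Fin n) (Fin n) ℝ) (d : Fin n → ℝ)
    (hrank : M.rank = n)
    (hS : S = Matrix.diagonal d) (hd : ∀ i, d i ≠ 0)
    (hV : Vᵀ * V = 1) (hV' : V * Vᵀ = 1)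
    (hU1 : U₁ᵀ * U₁ = 1) (hU12 : U₁ᵀ * U₂ = 0)
    (hcomp : U₁ * U₁ᵀ + U₂ * U₂ᵀ = 1)
    (hM : M = U₁ * S * Vᵀ)
    (f : Fin N → ℝ) (lam : ℝ) (hlam : 0 < lam)
    (JP : (Fin n → ℝ) → (Fin m → ℝ) → ℝ)
    (hJP : ∀ θ φ, JP θ φ =
      (f - M *ᵥ θ - H *ᵥ φ) ⬝ᵥ (f - M *ᵥ θ - H *ᵥ φ) +
      lam * (((S * Vᵀ)⁻¹ *ᵥ (U₁ᵀ *ᵥ (H *ᵥ φ))) ⬝ᵥ ((S * Vᵀ)⁻¹ *ᵥ (U₁ᵀ *ᵥ (H *ᵥ φ)))))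
    (θs : Fin n → ℝ) (φs : Fin m → ℝ) (hφs : U₁ᵀ *ᵥ (H *ᵥ φs) = 0)
    (vφ₁ : Fin m → ℝ) (hv₁ : M *ᵥ (0 : Fin n → ℝ) + H *ᵥ vφ₁ = 0)
    (vθ₂ : Fin n → ℝ) (vφ₂ : Fin m → ℝ) (hv₂ : M *ᵥ vθ₂ + H *ᵥ vφ₂ = 0)
    (hvθ₂ : vθ₂ ≠ 0) :
    JP (θs + 0) (φs + vφ₁) < JP (θs + vθ₂) (φs + vφ₂) := by
  have hHv1 : H *ᵥ vφ₁ = 0 := by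
    simpa [Matrix.mulVec_zero] using hv₁
  have hHv2 : H *ᵥ vφ₂ = -(M *ᵥ vθ₂) := eq_neg_of_add_eq_zero_right hv₂
  -- residuals are equal
  have hr1 : f - M *ᵥ (θs + 0) - H *ᵥ (φs + vφ₁) = f - M *ᵥ θs - H *ᵥ φs := by
    simp [Matrix.mulVec_add, hHv1]
  have hr2 : f - M *ᵥ (θs + vθ₂) - H *ᵥ (φs + vφ₂) = f - M *ᵥ θs - H *ᵥ φs := by
    rw [Matrix.mulVec_add, Matrix.mulVec_add, hHv2]
    abel
  -- invertibility of S * Vᵀ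
  have hdetS : IsUnit S.det := by
    rw [hS, Matrix.det_diagonal]
    exact (Finset.prod_ne_zero_iff.mpr (fun i _ => hd i)).isUnit
  have hdetV : IsUnit Vᵀ.det := by
    refine IsUnit.of_mul_eq_one (a := Vᵀ.det) V.det ?_
    rw [← Matrix.det_mul, hV, Matrix.det_one]
  have hdet : IsUnit (S * Vᵀ).det := by
    rw [Matrix.det_mul]; exact hdetS.mul hdetV
  have hinv : (S * Vᵀ)⁻¹ * (S * Vᵀ) = 1 := Matrix.nonsing_inv_mul _ hdet
  -- U₁ᵀ M = S Vᵀ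
  have hU1M : U₁ᵀ * M = S * Vᵀ := by
    rw [hM, Matrix.mul_assoc, ← Matrix.mul_assoc U₁ᵀ U₁, hU1, Matrix.one_mul]
  -- regularizer vector for v₁ side is zero
  have hreg1 : U₁ᵀ *ᵥ (H *ᵥ (φs + vφ₁)) = 0 := by
    rw [Matrix.mulVec_add, hHv1, add_zero, hφs]
  -- regularizer vector for v₂ side is -vθ₂
  have hreg2 : (S * Vᵀ)⁻¹ *ᵥ (U₁ᵀ *ᵥ (H *ᵥ (φs + vφ₂))) = -vθ₂ := by
    rw [Matrix.mulVec_add, Matrix.mulVec_add, hφs, zero_add, hHv2,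
      Matrix.mulVec_neg, Matrix.mulVec_mulVec, hU1M, Matrix.mulVec_neg,
      Matrix.mulVec_mulVec, hinv, Matrix.one_mulVec]
  have hpos : 0 < vθ₂ ⬝ᵥ vθ₂ := by
    have hnn : 0 ≤ vθ₂ ⬝ᵥ vθ₂ :=
      Finset.sum_nonneg fun i _ => mul_self_nonneg _
    rcases hnn.lt_or_eq with h | h
    · exact h
    · exact absurd ((dotProduct_self_eq_zero).mp h.symm) hvθ₂
  rw [hJP, hJP, hr1, hr2, hreg1, hreg2, Matrix.mulVec_zero]
  have : (-vθ₂) ⬝ᵥ (-vθ₂) = vθ₂ ⬝ᵥ vθ₂ := by simp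
  rw [this]
  simp only [dotProduct_zero, mul_zero, add_zero]
  nlinarith [mul_pos hlam hpos]
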